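/- Let X₁ be a finite abstract simplicial complex on a vertex set V, let X₂ be a subcomplex of X₁, and let Y be a finite abstract simplicial complex on a vertex set W disjoint from V. If X₁ LC-reduces to X₂, then the join X₁ ∗ Y LC-reduces to the join X₂ ∗ Y. -/
import Mathlib


open Finset Function

variable {V : Type} [Fintype V] [DecidableEq V]

/-- A collection of finite sets closed under taking subsets: an abstract simplicial
complex on its own vertex set. -/
def DownClosed (Δ : Finset (Finset V)) : Prop :=
  ∀ S ∈ Δ, ∀ T ⊆ S, T ∈ Δ

/-- The vertex set of a complex: those `v` with `{v}` a face. -/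
def verts (Δ : Finset (Finset V)) : Finset V :=
  Finset.univ.filter fun v => ({v} : Finset V) ∈ Δ

/-- `F` is a facet of `Δ`, i.e. a face maximal under inclusion. -/
def IsFacet (Δ : Finset (Finset V)) (F : Finset V) : Prop :=
  F ∈ Δ ∧ ∀ G ∈ Δ, F ⊆ G → F = G

/-- `F(v)`: the set of facets of `Δ` containing the vertex `v`. -/
def facetsOf (Δ : Finset (Finset V)) (v : V) : Set (Finset V) :=
  {F | IsFacet Δ F ∧ v ∈ F}

/-- `κ` restricts to a surjective `k`-linear coloring of the vertex set of `Δ`: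
every color is used on some vertex of `Δ`, and vertices of `Δ` with the same color
have facet sets comparable by inclusion. -/
def IsLinearOn {k : ℕ} (Δ : Finset (Finset V)) (κ : V → Fin k) : Prop :=
  (∀ i : Fin k, ∃ v ∈ verts Δ, κ v = i) ∧
  ∀ u ∈ verts Δ, ∀ v ∈ verts Δ, κ u = κ v →
    facetsOf Δ u ⊆ facetsOf Δ v ∨ facetsOf Δ v ⊆ facetsOf Δ u

/-- `Δ'` is a representative subcomplex of `Δ` with respect to the linear coloring `κ`
of `Δ`: `Δ'` is a subcomplex with exactly one vertex of each color, and whenever a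
vertex `x` of `Δ` has the same color as a vertex `y` of `Δ'`, `F(x) ⊆ F(y)`. -/
def IsRepSub {k : ℕ} (Δ Δ' : Finset (Finset V)) (κ : V → Fin k) : Prop :=
  Δ' ⊆ Δ ∧ DownClosed Δ' ∧ IsLinearOn Δ κ ∧
  (∀ i : Fin k, ∃! y : V, y ∈ verts Δ' ∧ κ y = i) ∧
  ∀ x ∈ verts Δ, ∀ y ∈ verts Δ', κ x = κ y → facetsOf Δ x ⊆ facetsOf Δ y

/-- `Δ` LC-reduces to `Δ'`: there is a chain of subcomplexes from `Δ` to `Δ'` in which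
each term is a representative subcomplex of the previous one with respect to some
linear coloring. -/
def LCReduces (Δ Δ' : Finset (Finset V)) : Prop :=
  ∃ (t : ℕ) (c : ℕ → Finset (Finset V)), c 0 = Δ ∧ c t = Δ' ∧
    ∀ r < t, ∃ (k : ℕ) (κ : V → Fin k), IsRepSub (c r) (c (r + 1)) κ

/-- The join of a complex on `V` and a complex on `W` (disjointness of the vertex
sets is modeled by the sum type `V ⊕ W`): its faces are the unions `S ∪ T` with
`S ∈ X ∪ {∅}` and `T ∈ Y ∪ {∅}`. -/
def simplicialJoin {W : Type} [Fintype W] [DecidableEq W]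
    (X : Finset (Finset V)) (Y : Finset (Finset W)) : Finset (Finset (V ⊕ W)) :=
  ((insert (∅ : Finset V) X) ×ˢ (insert (∅ : Finset W) Y)).image
    fun p => p.1.map Function.Embedding.inl ∪ p.2.map Function.Embedding.inr

set_option linter.unusedSectionVars false

namespace JoinAux

variable {W : Type} [Fintype W] [DecidableEq W]

noncomputable def pl (F : Finset (V ⊕ W)) : Finset V := F.preimage Sum.inl Sum.inl_injective.injOn

noncomputable def pr (F : Finset (V ⊕ W)) : Finset W := F.preimage Sum.inr Sum.inr_injective.injOn

lemma mem_pl {F : Finset (V ⊕ W)} {v : V} : v ∈ pl F ↔ Sum.inl v ∈ F :=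
  Finset.mem_preimage

lemma mem_pr {F : Finset (V ⊕ W)} {w : W} : w ∈ pr F ↔ Sum.inr w ∈ F :=
  Finset.mem_preimage

lemma pl_union_map (S : Finset V) (T : Finset W) :
    pl (S.map Function.Embedding.inl ∪ T.map Function.Embedding.inr) = S := by
  ext v; simp [mem_pl]

lemma pr_union_map (S : Finset V) (T : Finset W) :
    pr (S.map Function.Embedding.inl ∪ T.map Function.Embedding.inr) = T := by
  ext w; simp [mem_pr]

lemma decomp (F : Finset (V ⊕ W)) :
    F = (pl F).map Function.Embedding.inl ∪ (pr F).map Function.Embedding.inr := by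
  ext x; cases x <;> simp [mem_pl, mem_pr]

lemma mem_join_iff {X : Finset (Finset V)} {Y : Finset (Finset W)} {F : Finset (V ⊕ W)} :
    F ∈ simplicialJoin X Y ↔ pl F ∈ insert ∅ X ∧ pr F ∈ insert ∅ Y := by
  constructor
  · intro hF
    simp only [simplicialJoin, Finset.mem_image, Finset.mem_product] at hF
    obtain ⟨⟨S, T⟩, ⟨hS, hT⟩, rfl⟩ := hF
    rw [pl_union_map, pr_union_map]
    exact ⟨hS, hT⟩
  · rintro ⟨h1, h2⟩
    simp only [simplicialJoin, Finset.mem_image, Finset.mem_product]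
    exact ⟨(pl F, pr F), ⟨h1, h2⟩, (decomp F).symm⟩


lemma pl_mono {F G : Finset (V ⊕ W)} (h : G ⊆ F) : pl G ⊆ pl F :=
  fun _ hx => mem_pl.mpr (h (mem_pl.mp hx))

lemma pr_mono {F G : Finset (V ⊕ W)} (h : G ⊆ F) : pr G ⊆ pr F :=
  fun _ hx => mem_pr.mpr (h (mem_pr.mp hx))

lemma insert_empty_dc {X : Finset (Finset V)} (hX : DownClosed X) {S T : Finset V}
    (hS : S ∈ insert ∅ X) (hT : T ⊆ S) : T ∈ insert ∅ X := by
  rcases Finset.mem_insert.mp hS with rfl | h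
  · rw [Finset.subset_empty.mp hT]; exact Finset.mem_insert_self _ _
  · exact Finset.mem_insert_of_mem (hX S h T hT)

lemma verts_join_inl {X : Finset (Finset V)} {Y : Finset (Finset W)} {v : V} :
    Sum.inl v ∈ verts (simplicialJoin X Y) ↔ v ∈ verts X := by
  simp only [verts, Finset.mem_filter, Finset.mem_univ, true_and]
  rw [mem_join_iff]
  have h1 : pl ({Sum.inl v} : Finset (V ⊕ W)) = {v} := by ext; simp [mem_pl]
  have h2 : pr ({Sum.inl v} : Finset (V ⊕ W)) = ∅ := by ext; simp [mem_pr]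
  rw [h1, h2]
  simp [Finset.singleton_ne_empty]

lemma verts_join_inr {X : Finset (Finset V)} {Y : Finset (Finset W)} {w : W} :
    Sum.inr w ∈ verts (simplicialJoin X Y) ↔ w ∈ verts Y := by
  simp only [verts, Finset.mem_filter, Finset.mem_univ, true_and]
  rw [mem_join_iff]
  have h1 : pl ({Sum.inr w} : Finset (V ⊕ W)) = ∅ := by ext; simp [mem_pl]
  have h2 : pr ({Sum.inr w} : Finset (V ⊕ W)) = {w} := by ext; simp [mem_pr]
  rw [h1, h2]
  simp [Finset.singleton_ne_empty]

/-- If `F` is a facet of the join and its `V`-part is nonempty, the `V`-part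
is a facet of `X`. -/
lemma facet_pl {X : Finset (Finset V)} {Y : Finset (Finset W)} {F : Finset (V ⊕ W)}
    (hF : IsFacet (simplicialJoin X Y) F) (hne : (pl F).Nonempty) : IsFacet X (pl F) := by
  obtain ⟨hmem1, hmem2⟩ := mem_join_iff.mp hF.1
  have h1 : pl F ∈ X := by
    rcases Finset.mem_insert.mp hmem1 with h | h
    · exact absurd h hne.ne_empty
    · exact h
  refine ⟨h1, fun G hG hsubG => ?_⟩
  have hmem : G.map Function.Embedding.inl ∪ (pr F).map Function.Embedding.inr
      ∈ simplicialJoin X Y := by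
    rw [mem_join_iff, pl_union_map, pr_union_map]
    exact ⟨Finset.mem_insert_of_mem hG, hmem2⟩
  have hFsub : F ⊆ G.map Function.Embedding.inl ∪ (pr F).map Function.Embedding.inr := by
    nth_rewrite 1 [decomp F]
    exact Finset.union_subset_union_left (Finset.map_subset_map.mpr hsubG)
  have heq := hF.2 _ hmem hFsub
  calc pl F = pl (G.map Function.Embedding.inl ∪ (pr F).map Function.Embedding.inr) := by
        rw [← heq]
    _ = G := pl_union_map _ _

lemma facets_mono {X : Finset (Finset V)} {Y : Finset (Finset W)} {u v : V}
    (h : facetsOf X u ⊆ facetsOf X v) :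
    facetsOf (simplicialJoin X Y) (Sum.inl u) ⊆ facetsOf (simplicialJoin X Y) (Sum.inl v) := by
  rintro F ⟨hfac, hu⟩
  have hu' : u ∈ pl F := mem_pl.mpr hu
  have hplfac : IsFacet X (pl F) := facet_pl hfac ⟨u, hu'⟩
  have hv : pl F ∈ facetsOf X v := h ⟨hplfac, hu'⟩
  exact ⟨hfac, mem_pl.mp hv.2⟩

/-- The extended coloring on the join. -/
noncomputable def joinColor {k : ℕ} (κ : V → Fin k) : V ⊕ W → Fin (k + Fintype.card W) :=
  Sum.elim (fun v => Fin.castAdd (Fintype.card W) (κ v))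
    (fun w => Fin.natAdd k (Fintype.equivFin W w))

lemma joinColor_ne {k : ℕ} (κ : V → Fin k) (v : V) (w : W) :
    joinColor (W := W) κ (Sum.inl v) ≠ joinColor κ (Sum.inr w) := by
  intro h
  have := congrArg Fin.val h
  simp only [joinColor, Sum.elim_inl, Sum.elim_inr, Fin.coe_castAdd, Fin.coe_natAdd] at this
  have := (κ v).isLt
  omega

lemma joinColor_inl_inj {k : ℕ} {κ : V → Fin k} {a b : V}
    (h : joinColor (W := W) κ (Sum.inl a) = joinColor κ (Sum.inl b)) : κ a = κ b := by
  have := congrArg Fin.val h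
  simp only [joinColor, Sum.elim_inl, Fin.coe_castAdd] at this
  exact Fin.ext this

lemma joinColor_inr_inj {k : ℕ} {κ : V → Fin k} {a b : W}
    (h : joinColor (W := W) κ (Sum.inr a) = joinColor κ (Sum.inr b)) : a = b := by
  have := congrArg Fin.val h
  simp only [joinColor, Sum.elim_inr, Fin.coe_natAdd] at this
  exact (Fintype.equivFin W).injective (Fin.ext (by omega))

lemma join_repsub {k : ℕ} {Δ Δ' : Finset (Finset V)} {Y : Finset (Finset W)} {κ : V → Fin k}
    (hYdc : DownClosed Y) (hYv : ∀ w : W, ({w} : Finset W) ∈ Y)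
    (h : IsRepSub Δ Δ' κ) :
    IsRepSub (simplicialJoin Δ Y) (simplicialJoin Δ' Y) (joinColor κ) := by
  obtain ⟨hsub, hdc, ⟨hsurj, hlin⟩, huniq, hface⟩ := h
  have hvY : ∀ w : W, w ∈ verts Y := fun w => by
    simp [verts, hYv w]
  refine ⟨?_, ?_, ⟨?_, ?_⟩, ?_, ?_⟩
  · -- subset
    intro F hF
    rw [mem_join_iff] at hF ⊢
    exact ⟨Finset.insert_subset_insert _ hsub hF.1, hF.2⟩
  · -- DownClosed
    intro F hF G hG
    rw [mem_join_iff] at hF ⊢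
    exact ⟨insert_empty_dc hdc hF.1 (pl_mono hG), insert_empty_dc hYdc hF.2 (pr_mono hG)⟩
  · -- surjectivity
    intro i
    refine Fin.addCases (fun j => ?_) (fun j => ?_) i
    · obtain ⟨v, hv, hκ⟩ := hsurj j
      exact ⟨Sum.inl v, verts_join_inl.mpr hv, by simp [joinColor, hκ]⟩
    · refine ⟨Sum.inr ((Fintype.equivFin W).symm j), verts_join_inr.mpr (hvY _), ?_⟩
      simp [joinColor]
  · -- linearity
    rintro (a | a) hu (b | b) hv heq
    · have ha := verts_join_inl.mp hu
      have hb := verts_join_inl.mp hv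
      rcases hlin a ha b hb (joinColor_inl_inj heq) with h' | h'
      · exact Or.inl (facets_mono h')
      · exact Or.inr (facets_mono h')
    · exact absurd heq (joinColor_ne κ a b)
    · exact absurd heq.symm (joinColor_ne κ b a)
    · rw [joinColor_inr_inj heq]
      exact Or.inl subset_rfl
  · -- exactly one vertex of each color
    intro i
    refine Fin.addCases (fun j => ?_) (fun j => ?_) i
    · obtain ⟨y, ⟨hy, hκ⟩, hyu⟩ := huniq j
      refine ⟨Sum.inl y, ⟨verts_join_inl.mpr hy, by simp [joinColor, hκ]⟩, ?_⟩
      rintro (z | z) ⟨hz, hzκ⟩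
      · have : κ z = j := by
          have := congrArg Fin.val hzκ
          simp only [joinColor, Sum.elim_inl, Fin.coe_castAdd] at this
          exact Fin.ext this
        rw [hyu z ⟨verts_join_inl.mp hz, this⟩]
      · exact absurd hzκ.symm (by
          have h1 : joinColor (W := W) κ (Sum.inl y) = Fin.castAdd (Fintype.card W) j := by
            simp [joinColor, hκ]
          rw [← h1]
          exact joinColor_ne κ y z)
    · refine ⟨Sum.inr ((Fintype.equivFin W).symm j), ⟨verts_join_inr.mpr (hvY _), by
        simp [joinColor]⟩, ?_⟩
      rintro (z | z) ⟨hz, hzκ⟩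
      · exact absurd hzκ (by
          have h1 : joinColor (W := W) κ (Sum.inr ((Fintype.equivFin W).symm j))
              = Fin.natAdd k j := by simp [joinColor]
          rw [← h1]
          exact joinColor_ne κ z _)
      · have : Fintype.equivFin W z = j := by
          have := congrArg Fin.val hzκ
          simp only [joinColor, Sum.elim_inr, Fin.coe_natAdd] at this
          exact Fin.ext (by omega)
        rw [← this]
        simp
  · -- facet inclusion condition
    rintro (a | a) hx (b | b) hy heq
    · exact facets_mono (hface a (verts_join_inl.mp hx) b (verts_join_inl.mp hy)
        (joinColor_inl_inj heq))
    · exact absurd heq (joinColor_ne κ a b)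
    · exact absurd heq.symm (joinColor_ne κ b a)
    · rw [joinColor_inr_inj heq]

end JoinAux

set_option linter.unusedVariables false

/-- If `X₁` LC-reduces to `X₂`, then `X₁ ∗ Y` LC-reduces to `X₂ ∗ Y`. -/
theorem stmt_11 {W : Type} [Fintype W] [DecidableEq W]
    (X₁ X₂ : Finset (Finset V)) (Y : Finset (Finset W))
    (hX₁ : DownClosed X₁ ∧ ∀ v : V, ({v} : Finset V) ∈ X₁)
    (hsub : X₂ ⊆ X₁) (hX₂ : DownClosed X₂)
    (hY : DownClosed Y ∧ ∀ w : W, ({w} : Finset W) ∈ Y)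
    (h : LCReduces X₁ X₂) :
    LCReduces (simplicialJoin X₁ Y) (simplicialJoin X₂ Y) := by
  obtain ⟨t, c, h0, ht, hstep⟩ := h
  refine ⟨t, fun r => simplicialJoin (c r) Y, by simp only [h0], by simp only [ht],
    fun r hr => ?_⟩
  obtain ⟨k, κ, hrep⟩ := hstep r hr
  exact ⟨k + Fintype.card W, JoinAux.joinColor κ, JoinAux.join_repsub hY.1 hY.2 hrep⟩
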